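/- Let X ∈ ℝ^{p×n}, W, Ŵ ∈ ℝ^{q×p}, Σ = X Xᵀ, and fix indices i ∈ [q], j ∈ [p] with Σ_{j,j} > 0. Consider the one-dimensional function u ↦ ‖W X − Ŵ(u) X‖_F² where Ŵ(u) agrees with Ŵ except entry (i,j) which equals u. Then this function is minimized over u ∈ ℝ at β̃ = −(∑_{k≠j} Σ_{j,k} Ŵ_{i,k} − (W Σ)_{i,j}) / Σ_{j,j}, and it is minimized over u ∈ Q_i (a finite grid) at q_i(β̃), where q_i is nearest-point quantization onto Q_i. -/

import Mathlib

open Matrix Finset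

/-- The one-dimensional (in entry `(i,j)`) layerwise quantization objective
`u ↦ ‖W X − Ŵ(u) X‖_F²` is minimized over ℝ at `β̃` and over the grid `Q_i` at `q_i(β̃)`. -/
theorem stmt_1 (q p n : ℕ) (X : Matrix (Fin p) (Fin n) ℝ)
    (W What : Matrix (Fin q) (Fin p) ℝ) (i : Fin q) (j : Fin p)
    (Qi : Finset ℝ) (hQi : Qi.Nonempty) (qf : ℝ → ℝ)
    (hqf : ∀ x : ℝ, qf x ∈ Qi ∧ ∀ y ∈ Qi, (x - qf x) ^ 2 ≤ (x - y) ^ 2)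
    (S : Matrix (Fin p) (Fin p) ℝ) (hS : S = X * Xᵀ) (hjj : 0 < S j j)
    (F : ℝ → ℝ)
    (hF : ∀ u : ℝ, F u = ∑ r, ∑ c,
      ((W * X - (Matrix.of fun r' c' => if r' = i ∧ c' = j then u else What r' c') * X) r c) ^ 2)
    (βt : ℝ)
    (hβ : βt = -((∑ k ∈ Finset.univ.erase j, S j k * What i k) - (W * S) i j) / S j j) :
    (∀ u : ℝ, F βt ≤ F u) ∧ (qf βt ∈ Qi ∧ ∀ u ∈ Qi, F (qf βt) ≤ F u) := by
  have hSjj : S j j = ∑ c, X j c ^ 2 := by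
    subst hS; simp [Matrix.mul_apply, Matrix.transpose_apply, sq]
  have hSsym : ∀ k, S j k = ∑ c, X j c * X k c := by
    intro k; subst hS; simp [Matrix.mul_apply, Matrix.transpose_apply]
  set A : Fin n → ℝ := fun c => (W * X) i c - ∑ k ∈ Finset.univ.erase j, What i k * X k c with hA
  set B : ℝ := ∑ c, A c * X j c with hBdef
  -- row i of the modified product
  have hrow : ∀ (u : ℝ) (c : Fin n),
      ((Matrix.of fun r' c' => if r' = i ∧ c' = j then u else What r' c') * X) i c
        = u * X j c + ∑ k ∈ Finset.univ.erase j, What i k * X k c := by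
    intro u c
    rw [Matrix.mul_apply,
      ← Finset.add_sum_erase _ (fun k =>
        (Matrix.of fun r' c' => if r' = i ∧ c' = j then u else What r' c') i k * X k c)
        (Finset.mem_univ j)]
    congr 1
    · simp
    · refine Finset.sum_congr rfl fun k hk => ?_
      have hkj : k ≠ j := Finset.ne_of_mem_erase hk
      rw [Matrix.of_apply, if_neg (fun h => hkj h.2)]
  -- rows other than i are unaffected
  have hother : ∀ (u : ℝ) (r : Fin q), r ≠ i → ∀ c,
      ((Matrix.of fun r' c' => if r' = i ∧ c' = j then u else What r' c') * X) r c
        = (What * X) r c := by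
    intro u r hr c
    rw [Matrix.mul_apply, Matrix.mul_apply]
    refine Finset.sum_congr rfl fun k _ => ?_
    rw [Matrix.of_apply, if_neg (fun h => hr h.1)]
  set C0 : ℝ := ∑ r ∈ Finset.univ.erase i, ∑ c, ((W * X - What * X) r c) ^ 2 with hC0
  have hFu : ∀ u : ℝ, F u = C0 + ∑ c, (A c - u * X j c) ^ 2 := by
    intro u
    rw [hF u, ← Finset.add_sum_erase _ _ (Finset.mem_univ i), add_comm]
    congr 1
    · refine Finset.sum_congr rfl fun r hr => ?_
      refine Finset.sum_congr rfl fun c _ => ?_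
      rw [Matrix.sub_apply, Matrix.sub_apply, hother u r (Finset.ne_of_mem_erase hr) c]
    · refine Finset.sum_congr rfl fun c _ => ?_
      rw [Matrix.sub_apply, hrow u c, hA]
      ring
  have expand : ∀ v : ℝ, (∑ c, (A c - v * X j c) ^ 2)
      = (∑ c, A c ^ 2) - 2 * v * B + v ^ 2 * S j j := by
    intro v
    rw [hSjj, hBdef, Finset.mul_sum, Finset.mul_sum, ← Finset.sum_sub_distrib,
      ← Finset.sum_add_distrib]
    exact Finset.sum_congr rfl fun c _ => by ring
  have hB : B = S j j * βt := by
    have hBval : B = (W * S) i j - ∑ k ∈ Finset.univ.erase j, S j k * What i k := by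
      rw [hBdef]
      have h1 : ∀ c, A c * X j c
          = (W * X) i c * X j c - ∑ k ∈ Finset.univ.erase j, What i k * (X k c * X j c) := by
        intro c; rw [hA]; rw [sub_mul, Finset.sum_mul]
        congr 1
        exact Finset.sum_congr rfl fun k _ => by ring
      rw [Finset.sum_congr rfl fun c _ => h1 c, Finset.sum_sub_distrib]
      congr 1
      · have : (W * S) i j = ∑ c, (W * X) i c * X j c := by
          subst hS
          rw [← Matrix.mul_assoc, Matrix.mul_apply]
          exact Finset.sum_congr rfl fun c _ => by rw [Matrix.transpose_apply]
        rw [this]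
      · rw [Finset.sum_comm]
        refine Finset.sum_congr rfl fun k _ => ?_
        rw [hSsym k, Finset.sum_mul]
        exact Finset.sum_congr rfl fun c _ => by ring
    rw [hBval, hβ]
    field_simp
    ring
  have key : ∀ u : ℝ, F u = F βt + S j j * (u - βt) ^ 2 := by
    intro u
    rw [hFu u, hFu βt, expand u, expand βt]
    linear_combination (2 * βt - 2 * u) * hB
  refine ⟨fun u => ?_, (hqf βt).1, fun u hu => ?_⟩
  · rw [key u]
    nlinarith [mul_nonneg hjj.le (sq_nonneg (u - βt))]
  · rw [key u, key (qf βt)]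
    have h2 : (βt - qf βt) ^ 2 ≤ (βt - u) ^ 2 := (hqf βt).2 u hu
    nlinarith [mul_le_mul_of_nonneg_left h2 hjj.le]
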